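/- Let m, a, b, n, A be as follows: n ≥ 3, (3m+1)/2 ≤ a < b ≤ (5m-1)/3, A ⊆ ℕ with |A| = n-1, min A = a, max A = b, and the image of A in ℤ/mℤ a B₃ set of cardinality n-1. Let S = ⟨{m} ∪ A⟩ ∪ [4m, ∞). Then W(S) ≥ 9; in particular S satisfies Wilf's conjecture. -/

import Mathlib

open Set Pointwise

/-- `S` is a numerical semigroup: a cofinite submonoid of `ℕ` containing `0`. -/
def IsNumSgp (S : Set ℕ) : Prop :=
  0 ∈ S ∧ (∀ a ∈ S, ∀ b ∈ S, a + b ∈ S) ∧ Sᶜ.Finite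

/-- multiplicity `m = min (S \ {0})`. -/
noncomputable def NSmult (S : Set ℕ) : ℕ := sInf (S \ {0})

/-- NSconductor: least `c` with `c + ℕ ⊆ S`. -/
noncomputable def NSconductor (S : Set ℕ) : ℕ := sInf {n | ∀ k, n ≤ k → k ∈ S}

/-- primitive elements: nonzero elements not a sum of two nonzero elements of `S`. -/
noncomputable def NSprims (S : Set ℕ) : Set ℕ :=
  {a | a ∈ S ∧ a ≠ 0 ∧ ¬ ∃ x, x ∈ S ∧ x ≠ 0 ∧ ∃ y, y ∈ S ∧ y ≠ 0 ∧ a = x + y}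

/-- `L = S ∩ [0, c-1]`. -/
noncomputable def NSLset (S : Set ℕ) : Set ℕ := S ∩ Set.Iio (NSconductor S)

/-- `q = ⌈c / m⌉`. -/
noncomputable def NSqnum (S : Set ℕ) : ℕ := (NSconductor S + NSmult S - 1) / NSmult S

/-- `ρ = q * m - c`. -/
noncomputable def NSrho (S : Set ℕ) : ℕ := NSqnum S * NSmult S - NSconductor S

/-- `D_q = [c, c+m-1] \ P`, the non-primitive elements of `S` in `[c, c+m-1]`. -/
noncomputable def NSDq (S : Set ℕ) : Set ℕ :=
  Set.Icc (NSconductor S) (NSconductor S + NSmult S - 1) \ NSprims S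

/-- `W(S) = |P| |L| - c`. -/
noncomputable def NSWnum (S : Set ℕ) : ℤ :=
  (NSprims S).ncard * (NSLset S).ncard - NSconductor S

/-- `W₀(S) = |P ∩ L| |L| - q |D_q| + ρ`. -/
noncomputable def NSW0num (S : Set ℕ) : ℤ :=
  (NSprims S ∩ NSLset S).ncard * (NSLset S).ncard - NSqnum S * (NSDq S).ncard + NSrho S

/-- `⟨T⟩_t`: the submonoid generated by `T` together with all integers `≥ t`. -/
noncomputable def NSgenUpTo (T : Set ℕ) (t : ℕ) : Set ℕ :=
  (AddSubmonoid.closure T : Set ℕ) ∪ {n | t ≤ n}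

/-- Apéry set of `S` with respect to `m`: elements `s ∈ S` with `s - m ∉ S`. -/
noncomputable def NSapery (S : Set ℕ) : Set ℕ :=
  {s | s ∈ S ∧ ∀ t, s = t + NSmult S → t ∉ S}

/-- the interval `I_j = [jm - ρ, (j+1)m - ρ - 1]` (intersected with `ℕ`). -/
noncomputable def NSIint (S : Set ℕ) (j : ℕ) : Set ℕ :=
  Set.Icc (j * NSmult S - NSrho S) ((j + 1) * NSmult S - NSrho S - 1)

/-- `X_j = Ap(S,m) ∩ I_j`. -/
noncomputable def NSXj (S : Set ℕ) (j : ℕ) : Set ℕ := NSapery S ∩ NSIint S j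

/-- decomposable elements `D = (S \ {0}) + (S \ {0})`. -/
noncomputable def NSdecomp (S : Set ℕ) : Set ℕ :=
  {s | ∃ x, x ∈ S ∧ x ≠ 0 ∧ ∃ y, y ∈ S ∧ y ≠ 0 ∧ s = x + y}

/-- `h`-fold sumset `hA = A + ⋯ + A`. -/
def hfold {G : Type*} [AddCommMonoid G] : ℕ → Set G → Set G
  | 0, _ => {0}
  | n + 1, A => A + hfold n A

/-- `A` is a `B_h` set: `|hA| = C(|A| + h - 1, h)`. -/
def IsBh {G : Type*} [AddCommMonoid G] (h : ℕ) (A : Set G) : Prop :=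
  (hfold h A).ncard = (A.ncard + h - 1).choose h



/-- explicit description of the elements of `⟨{m} ∪ A⟩ ∪ [4m,∞)`. -/
def inU (m : ℕ) (A : Set ℕ) (x : ℕ) : Prop :=
  4*m ≤ x ∨ ∃ p q, (p = 0 ∨ p ∈ A) ∧ (q = 0 ∨ q ∈ A) ∧
    (x = p + q ∨ x = m + p + q ∨ x = 2*m + p + q ∨ x = 3*m + p + q)

section
variable {m a b : ℕ} {A : Set ℕ}

lemma inU_add (ha : 3*m+1 ≤ 2*a) (hb : 3*b ≤ 5*m-1) (hm : 11 ≤ m)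
    (hA : ∀ p ∈ A, a ≤ p ∧ p ≤ b) {x y : ℕ}
    (hx : inU m A x) (hy : inU m A y) : inU m A (x+y) := by
  rcases hx with hx4 | ⟨p, q, hp, hq, hxe⟩
  · exact Or.inl (by omega)
  rcases hy with hy4 | ⟨r, s, hr, hs, hye⟩
  · exact Or.inl (by omega)
  rcases hp with hp | hp
  · rcases hq with hq | hq
    · rcases hr with hr | hr
      · rcases hs with hs | hs
        · rcases hxe with hxe | hxe | hxe | hxe <;> rcases hye with hye | hye | hye | hye <;>
            first
            | exact Or.inl (by omega)
            | exact Or.inr ⟨0, 0, Or.inl rfl, Or.inl rfl, by omega⟩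
        · obtain ⟨hs1, hs2⟩ := hA s hs
          rcases hxe with hxe | hxe | hxe | hxe <;> rcases hye with hye | hye | hye | hye <;>
            first
            | exact Or.inl (by omega)
            | exact Or.inr ⟨s, 0, Or.inr hs, Or.inl rfl, by omega⟩
      · rcases hs with hs | hs
        · obtain ⟨hr1, hr2⟩ := hA r hr
          rcases hxe with hxe | hxe | hxe | hxe <;> rcases hye with hye | hye | hye | hye <;>
            first
            | exact Or.inl (by omega)
            | exact Or.inr ⟨r, 0, Or.inr hr, Or.inl rfl, by omega⟩
        · obtain ⟨hr1, hr2⟩ := hA r hr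
          obtain ⟨hs1, hs2⟩ := hA s hs
          rcases hxe with hxe | hxe | hxe | hxe <;> rcases hye with hye | hye | hye | hye <;>
            first
            | exact Or.inl (by omega)
            | exact Or.inr ⟨r, s, Or.inr hr, Or.inr hs, by omega⟩
    · rcases hr with hr | hr
      · rcases hs with hs | hs
        · obtain ⟨hq1, hq2⟩ := hA q hq
          rcases hxe with hxe | hxe | hxe | hxe <;> rcases hye with hye | hye | hye | hye <;>
            first
            | exact Or.inl (by omega)
            | exact Or.inr ⟨q, 0, Or.inr hq, Or.inl rfl, by omega⟩
        · obtain ⟨hq1, hq2⟩ := hA q hq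
          obtain ⟨hs1, hs2⟩ := hA s hs
          rcases hxe with hxe | hxe | hxe | hxe <;> rcases hye with hye | hye | hye | hye <;>
            first
            | exact Or.inl (by omega)
            | exact Or.inr ⟨q, s, Or.inr hq, Or.inr hs, by omega⟩
      · rcases hs with hs | hs
        · obtain ⟨hq1, hq2⟩ := hA q hq
          obtain ⟨hr1, hr2⟩ := hA r hr
          rcases hxe with hxe | hxe | hxe | hxe <;> rcases hye with hye | hye | hye | hye <;>
            first
            | exact Or.inl (by omega)
            | exact Or.inr ⟨q, r, Or.inr hq, Or.inr hr, by omega⟩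
        · obtain ⟨hq1, hq2⟩ := hA q hq
          obtain ⟨hr1, hr2⟩ := hA r hr
          obtain ⟨hs1, hs2⟩ := hA s hs
          rcases hxe with hxe | hxe | hxe | hxe <;> rcases hye with hye | hye | hye | hye <;>
            exact Or.inl (by omega)
  · rcases hq with hq | hq
    · rcases hr with hr | hr
      · rcases hs with hs | hs
        · obtain ⟨hp1, hp2⟩ := hA p hp
          rcases hxe with hxe | hxe | hxe | hxe <;> rcases hye with hye | hye | hye | hye <;>
            first
            | exact Or.inl (by omega)
            | exact Or.inr ⟨p, 0, Or.inr hp, Or.inl rfl, by omega⟩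
        · obtain ⟨hp1, hp2⟩ := hA p hp
          obtain ⟨hs1, hs2⟩ := hA s hs
          rcases hxe with hxe | hxe | hxe | hxe <;> rcases hye with hye | hye | hye | hye <;>
            first
            | exact Or.inl (by omega)
            | exact Or.inr ⟨p, s, Or.inr hp, Or.inr hs, by omega⟩
      · rcases hs with hs | hs
        · obtain ⟨hp1, hp2⟩ := hA p hp
          obtain ⟨hr1, hr2⟩ := hA r hr
          rcases hxe with hxe | hxe | hxe | hxe <;> rcases hye with hye | hye | hye | hye <;>
            first
            | exact Or.inl (by omega)
            | exact Or.inr ⟨p, r, Or.inr hp, Or.inr hr, by omega⟩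
        · obtain ⟨hp1, hp2⟩ := hA p hp
          obtain ⟨hr1, hr2⟩ := hA r hr
          obtain ⟨hs1, hs2⟩ := hA s hs
          rcases hxe with hxe | hxe | hxe | hxe <;> rcases hye with hye | hye | hye | hye <;>
            exact Or.inl (by omega)
    · rcases hr with hr | hr
      · rcases hs with hs | hs
        · obtain ⟨hp1, hp2⟩ := hA p hp
          obtain ⟨hq1, hq2⟩ := hA q hq
          rcases hxe with hxe | hxe | hxe | hxe <;> rcases hye with hye | hye | hye | hye <;>
            first
            | exact Or.inl (by omega)
            | exact Or.inr ⟨p, q, Or.inr hp, Or.inr hq, by omega⟩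
        · obtain ⟨hp1, hp2⟩ := hA p hp
          obtain ⟨hq1, hq2⟩ := hA q hq
          obtain ⟨hs1, hs2⟩ := hA s hs
          rcases hxe with hxe | hxe | hxe | hxe <;> rcases hye with hye | hye | hye | hye <;>
            exact Or.inl (by omega)
      · rcases hs with hs | hs
        · obtain ⟨hp1, hp2⟩ := hA p hp
          obtain ⟨hq1, hq2⟩ := hA q hq
          obtain ⟨hr1, hr2⟩ := hA r hr
          rcases hxe with hxe | hxe | hxe | hxe <;> rcases hye with hye | hye | hye | hye <;>
            exact Or.inl (by omega)
        · obtain ⟨hp1, hp2⟩ := hA p hp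
          obtain ⟨hq1, hq2⟩ := hA q hq
          obtain ⟨hr1, hr2⟩ := hA r hr
          obtain ⟨hs1, hs2⟩ := hA s hs
          rcases hxe with hxe | hxe | hxe | hxe <;> rcases hye with hye | hye | hye | hye <;>
            exact Or.inl (by omega)
lemma genUpTo_eq (ha : 3*m+1 ≤ 2*a) (hb : 3*b ≤ 5*m-1) (hm : 11 ≤ m)
    (hA : ∀ p ∈ A, a ≤ p ∧ p ≤ b) :
    NSgenUpTo ({m} ∪ A) (4*m) = {x | inU m A x} := by
  apply subset_antisymm
  · rintro x (hx | hx)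
    · induction hx using AddSubmonoid.closure_induction with
      | mem g hg =>
        rcases hg with hg | hg
        · exact Or.inr ⟨0, 0, Or.inl rfl, Or.inl rfl, by simp at hg; omega⟩
        · exact Or.inr ⟨g, 0, Or.inr hg, Or.inl rfl, by omega⟩
      | zero => exact Or.inr ⟨0, 0, Or.inl rfl, Or.inl rfl, by omega⟩
      | add x y _ _ hx hy => exact inU_add ha hb hm hA hx hy
    · exact Or.inl hx
  · rintro x (hx4 | ⟨p, q, hp, hq, hxe⟩)
    · exact Or.inr hx4
    · left
      have hmem : m ∈ AddSubmonoid.closure ({m} ∪ A) :=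
        AddSubmonoid.subset_closure (Or.inl rfl)
      have hpm : p ∈ AddSubmonoid.closure ({m} ∪ A) := by
        rcases hp with rfl | hp
        · exact AddSubmonoid.zero_mem _
        · exact AddSubmonoid.subset_closure (Or.inr hp)
      have hqm : q ∈ AddSubmonoid.closure ({m} ∪ A) := by
        rcases hq with rfl | hq
        · exact AddSubmonoid.zero_mem _
        · exact AddSubmonoid.subset_closure (Or.inr hq)
      rcases hxe with rfl | rfl | rfl | rfl
      · exact AddSubmonoid.add_mem _ hpm hqm
      · exact AddSubmonoid.add_mem _ (AddSubmonoid.add_mem _ hmem hpm) hqm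
      · have h2 : 2*m + p + q = m + (m + (p + q)) := by ring
        rw [h2]
        exact AddSubmonoid.add_mem _ hmem (AddSubmonoid.add_mem _ hmem (AddSubmonoid.add_mem _ hpm hqm))
      · have h3 : 3*m + p + q = m + (m + (m + (p + q))) := by ring
        rw [h3]
        exact AddSubmonoid.add_mem _ hmem (AddSubmonoid.add_mem _ hmem
          (AddSubmonoid.add_mem _ hmem (AddSubmonoid.add_mem _ hpm hqm)))





/-- decomposable elements of `[4m, 5m)`. -/
def Dpred (m : ℕ) (A : Set ℕ) (x : ℕ) : Prop :=
  x = 4*m ∨ (∃ p ∈ A, x = 3*m + p) ∨ (∃ p ∈ A, ∃ q ∈ A, x = m + p + q) ∨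
    (∃ p ∈ A, ∃ q ∈ A, ∃ r ∈ A, x = p + q + r)

section
variable {m a b : ℕ} {A : Set ℕ}

lemma U_ge (ha : 3*m+1 ≤ 2*a) (hm : 11 ≤ m) (hA : ∀ p ∈ A, a ≤ p ∧ p ≤ b)
    {u : ℕ} (hu : inU m A u) (hu0 : u ≠ 0) : m ≤ u := by
  rcases hu with h | ⟨p, q, hp, hq, he⟩
  · omega
  have hp' : p = 0 ∨ a ≤ p := by rcases hp with h|h; exacts [Or.inl h, Or.inr (hA p h).1]
  have hq' : q = 0 ∨ a ≤ q := by rcases hq with h|h; exacts [Or.inl h, Or.inr (hA q h).1]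
  rcases he with he|he|he|he <;> rcases hp' with h1|h1 <;> rcases hq' with h2|h2 <;> omega

lemma not_inU_conductor_pred (ha : 3*m+1 ≤ 2*a) (hb : 3*b ≤ 5*m-1) (hm : 11 ≤ m)
    (hA : ∀ p ∈ A, a ≤ p ∧ p ≤ b) : ¬ inU m A (4*m - 1) := by
  rintro (h | ⟨p, q, hp, hq, he⟩)
  · omega
  have hp' : p = 0 ∨ (a ≤ p ∧ p ≤ b) := by rcases hp with h|h; exacts [Or.inl h, Or.inr (hA p h)]
  have hq' : q = 0 ∨ (a ≤ q ∧ q ≤ b) := by rcases hq with h|h; exacts [Or.inl h, Or.inr (hA q h)]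
  rcases he with he|he|he|he <;> rcases hp' with h1|h1 <;> rcases hq' with h2|h2 <;> omega

lemma conductor_U (ha : 3*m+1 ≤ 2*a) (hb : 3*b ≤ 5*m-1) (hm : 11 ≤ m)
    (hA : ∀ p ∈ A, a ≤ p ∧ p ≤ b) : NSconductor {x | inU m A x} = 4*m := by
  have h1 : 4*m ∈ {n | ∀ k, n ≤ k → k ∈ {x | inU m A x}} := fun k hk => Or.inl hk
  apply le_antisymm (Nat.sInf_le h1)
  apply le_csInf ⟨4*m, h1⟩
  intro t ht
  by_contra hlt
  exact not_inU_conductor_pred ha hb hm hA (ht (4*m-1) (by omega))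

/-- any decomposition of an element of `[4m, 5m)` gives an element of `Dpred`. -/
lemma decomp_window (ha : 3*m+1 ≤ 2*a) (hb : 3*b ≤ 5*m-1) (hm : 11 ≤ m)
    (hA : ∀ p ∈ A, a ≤ p ∧ p ≤ b) {x y z : ℕ} (hx4 : 4*m ≤ x) (hx5 : x < 5*m)
    (hy : inU m A y) (hy0 : y ≠ 0) (hz : inU m A z) (hz0 : z ≠ 0)
    (hxyz : x = y + z) : Dpred m A x := by
  have hym : m ≤ y := U_ge ha hm hA hy hy0
  have hzm : m ≤ z := U_ge ha hm hA hz hz0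
  rcases hy with h | ⟨p, q, hp, hq, hye⟩
  · omega
  rcases hz with h | ⟨r, s, hr, hs, hze⟩
  · omega
  rcases hp with hp | hp
  · rcases hq with hq | hq
    · rcases hr with hr | hr
      · rcases hs with hs | hs
        · rcases hye with hye | hye | hye | hye <;> rcases hze with hze | hze | hze | hze
          all_goals exact Or.inl (by omega)
        · obtain ⟨hs1, hs2⟩ := hA s hs
          rcases hye with hye | hye | hye | hye <;> rcases hze with hze | hze | hze | hze
          all_goals exact Or.inr (Or.inl ⟨s, hs, by omega⟩)
      · rcases hs with hs | hs
        · obtain ⟨hr1, hr2⟩ := hA r hr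
          rcases hye with hye | hye | hye | hye <;> rcases hze with hze | hze | hze | hze
          all_goals exact Or.inr (Or.inl ⟨r, hr, by omega⟩)
        · obtain ⟨hr1, hr2⟩ := hA r hr
          obtain ⟨hs1, hs2⟩ := hA s hs
          rcases hye with hye | hye | hye | hye <;> rcases hze with hze | hze | hze | hze
          all_goals exact Or.inr (Or.inr (Or.inl ⟨r, hr, s, hs, by omega⟩))
    · rcases hr with hr | hr
      · rcases hs with hs | hs
        · obtain ⟨hq1, hq2⟩ := hA q hq
          rcases hye with hye | hye | hye | hye <;> rcases hze with hze | hze | hze | hze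
          all_goals exact Or.inr (Or.inl ⟨q, hq, by omega⟩)
        · obtain ⟨hq1, hq2⟩ := hA q hq
          obtain ⟨hs1, hs2⟩ := hA s hs
          rcases hye with hye | hye | hye | hye <;> rcases hze with hze | hze | hze | hze
          all_goals exact Or.inr (Or.inr (Or.inl ⟨q, hq, s, hs, by omega⟩))
      · rcases hs with hs | hs
        · obtain ⟨hq1, hq2⟩ := hA q hq
          obtain ⟨hr1, hr2⟩ := hA r hr
          rcases hye with hye | hye | hye | hye <;> rcases hze with hze | hze | hze | hze
          all_goals exact Or.inr (Or.inr (Or.inl ⟨q, hq, r, hr, by omega⟩))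
        · obtain ⟨hq1, hq2⟩ := hA q hq
          obtain ⟨hr1, hr2⟩ := hA r hr
          obtain ⟨hs1, hs2⟩ := hA s hs
          rcases hye with hye | hye | hye | hye <;> rcases hze with hze | hze | hze | hze
          all_goals exact Or.inr (Or.inr (Or.inr ⟨q, hq, r, hr, s, hs, by omega⟩))
  · rcases hq with hq | hq
    · rcases hr with hr | hr
      · rcases hs with hs | hs
        · obtain ⟨hp1, hp2⟩ := hA p hp
          rcases hye with hye | hye | hye | hye <;> rcases hze with hze | hze | hze | hze
          all_goals exact Or.inr (Or.inl ⟨p, hp, by omega⟩)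
        · obtain ⟨hp1, hp2⟩ := hA p hp
          obtain ⟨hs1, hs2⟩ := hA s hs
          rcases hye with hye | hye | hye | hye <;> rcases hze with hze | hze | hze | hze
          all_goals exact Or.inr (Or.inr (Or.inl ⟨p, hp, s, hs, by omega⟩))
      · rcases hs with hs | hs
        · obtain ⟨hp1, hp2⟩ := hA p hp
          obtain ⟨hr1, hr2⟩ := hA r hr
          rcases hye with hye | hye | hye | hye <;> rcases hze with hze | hze | hze | hze
          all_goals exact Or.inr (Or.inr (Or.inl ⟨p, hp, r, hr, by omega⟩))
        · obtain ⟨hp1, hp2⟩ := hA p hp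
          obtain ⟨hr1, hr2⟩ := hA r hr
          obtain ⟨hs1, hs2⟩ := hA s hs
          rcases hye with hye | hye | hye | hye <;> rcases hze with hze | hze | hze | hze
          all_goals exact Or.inr (Or.inr (Or.inr ⟨p, hp, r, hr, s, hs, by omega⟩))
    · rcases hr with hr | hr
      · rcases hs with hs | hs
        · obtain ⟨hp1, hp2⟩ := hA p hp
          obtain ⟨hq1, hq2⟩ := hA q hq
          rcases hye with hye | hye | hye | hye <;> rcases hze with hze | hze | hze | hze
          all_goals exact Or.inr (Or.inr (Or.inl ⟨p, hp, q, hq, by omega⟩))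
        · obtain ⟨hp1, hp2⟩ := hA p hp
          obtain ⟨hq1, hq2⟩ := hA q hq
          obtain ⟨hs1, hs2⟩ := hA s hs
          rcases hye with hye | hye | hye | hye <;> rcases hze with hze | hze | hze | hze
          all_goals exact Or.inr (Or.inr (Or.inr ⟨p, hp, q, hq, s, hs, by omega⟩))
      · rcases hs with hs | hs
        · obtain ⟨hp1, hp2⟩ := hA p hp
          obtain ⟨hq1, hq2⟩ := hA q hq
          obtain ⟨hr1, hr2⟩ := hA r hr
          rcases hye with hye | hye | hye | hye <;> rcases hze with hze | hze | hze | hze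
          all_goals exact Or.inr (Or.inr (Or.inr ⟨p, hp, q, hq, r, hr, by omega⟩))
        · obtain ⟨hp1, hp2⟩ := hA p hp
          obtain ⟨hq1, hq2⟩ := hA q hq
          obtain ⟨hr1, hr2⟩ := hA r hr
          obtain ⟨hs1, hs2⟩ := hA s hs
          rcases hye with hye | hye | hye | hye <;> rcases hze with hze | hze | hze | hze
          all_goals exact absurd hx5 (by omega)

lemma ncard_Ico' (u v : ℕ) : (Set.Ico u v).ncard = v - u := by
  rw [Set.ncard_eq_toFinset_card']; simp

lemma ncard_Icc' (u v : ℕ) : (Set.Icc u v).ncard = v + 1 - u := by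
  rw [Set.ncard_eq_toFinset_card']; simp

section
variable {m a b : ℕ} {A : Set ℕ}

lemma prims_sub (ha : 3*m+1 ≤ 2*a) (hb : 3*b ≤ 5*m-1) (hm : 11 ≤ m)
    (hA : ∀ p ∈ A, a ≤ p ∧ p ≤ b) :
    ({m} : Set ℕ) ∪ A ∪ (Set.Ico (4*m) (5*m) \ {x | Dpred m A x}) ⊆
      NSprims {x | inU m A x} := by
  rintro x ((hx | hx) | hx)
  · rcases hx with rfl
    refine ⟨Or.inr ⟨0, 0, Or.inl rfl, Or.inl rfl, Or.inr (Or.inl (by omega))⟩, by omega, ?_⟩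
    rintro ⟨y, hy, hy0, z, hz, hz0, hxyz⟩
    have := U_ge ha hm hA hy hy0
    have := U_ge ha hm hA hz hz0
    omega
  · obtain ⟨h1, h2⟩ := hA x hx
    refine ⟨Or.inr ⟨x, 0, Or.inr hx, Or.inl rfl, Or.inl (by omega)⟩, by omega, ?_⟩
    rintro ⟨y, hy, hy0, z, hz, hz0, hxyz⟩
    have := U_ge ha hm hA hy hy0
    have := U_ge ha hm hA hz hz0
    omega
  · obtain ⟨hx1, hx2⟩ := hx
    rw [Set.mem_Ico] at hx1
    refine ⟨Or.inl hx1.1, by omega, ?_⟩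
    rintro ⟨y, hy, hy0, z, hz, hz0, hxyz⟩
    exact hx2 (decomp_window ha hb hm hA hx1.1 hx1.2 hy hy0 hz hz0 hxyz)

lemma prims_finite (ha : 3*m+1 ≤ 2*a) (hm : 11 ≤ m) :
    (NSprims {x | inU m A x}).Finite := by
  apply Set.Finite.subset (Set.finite_Iio (5*m))
  intro x hx
  obtain ⟨hxU, hx0, hxd⟩ := hx
  by_contra hge
  simp only [Set.mem_Iio, not_lt] at hge
  exact hxd ⟨m, Or.inr ⟨0, 0, Or.inl rfl, Or.inl rfl, Or.inr (Or.inl (by omega))⟩, by omega,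
    x - m, Or.inl (by omega), by omega, by omega⟩

/-- the explicit left part. -/
def LexSet (m : ℕ) (A : Set ℕ) : Set ℕ :=
  (((({0, m, 2*m, 3*m} : Set ℕ) ∪ A) ∪ ((fun x => m + x) '' A)) ∪ ((fun x => 2*m + x) '' A)) ∪ (A + A)

section LexMem
variable (m A)
lemma memM {x : ℕ} (h : x = 0 ∨ x = m ∨ x = 2*m ∨ x = 3*m) : x ∈ LexSet m A := by
  refine Or.inl (Or.inl (Or.inl (Or.inl ?_)))
  simp only [Set.mem_insert_iff, Set.mem_singleton_iff]
  tauto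
lemma memA0 {x : ℕ} (h : x ∈ A) : x ∈ LexSet m A := Or.inl (Or.inl (Or.inl (Or.inr h)))
lemma mem1 {p : ℕ} (h : p ∈ A) : m + p ∈ LexSet m A := Or.inl (Or.inl (Or.inr ⟨p, h, rfl⟩))
lemma mem2 {p : ℕ} (h : p ∈ A) : 2*m + p ∈ LexSet m A := Or.inl (Or.inr ⟨p, h, rfl⟩)
lemma memAA {p q : ℕ} (hp : p ∈ A) (hq : q ∈ A) : p + q ∈ LexSet m A :=
  Or.inr (Set.add_mem_add hp hq)
end LexMem

lemma Lset_eq (ha : 3*m+1 ≤ 2*a) (hb : 3*b ≤ 5*m-1) (hm : 11 ≤ m)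
    (hA : ∀ p ∈ A, a ≤ p ∧ p ≤ b) :
    NSLset {x | inU m A x} = LexSet m A := by
  unfold NSLset
  rw [conductor_U ha hb hm hA]
  ext x
  constructor
  · rintro ⟨hxU | ⟨p, q, hp, hq, hxe⟩, hxlt⟩
    · rw [Set.mem_Iio] at hxlt; omega
    rw [Set.mem_Iio] at hxlt
    rcases hp with hp | hp
    · rcases hq with hq | hq
      · exact memM m A (by omega)
      · obtain ⟨h1, h2⟩ := hA q hq
        rcases hxe with hxe|hxe|hxe|hxe
        · rw [show x = q by omega]; exact memA0 m A hq
        · rw [show x = m + q by omega]; exact mem1 m A hq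
        · rw [show x = 2*m + q by omega]; exact mem2 m A hq
        · omega
    · obtain ⟨h1, h2⟩ := hA p hp
      rcases hq with hq | hq
      · rcases hxe with hxe|hxe|hxe|hxe
        · rw [show x = p by omega]; exact memA0 m A hp
        · rw [show x = m + p by omega]; exact mem1 m A hp
        · rw [show x = 2*m + p by omega]; exact mem2 m A hp
        · omega
      · obtain ⟨h3, h4⟩ := hA q hq
        rcases hxe with hxe|hxe|hxe|hxe
        · rw [show x = p + q by omega]; exact memAA m A hp hq
        · omega
        · omega
        · omega
  · rintro ((((hx | hx) | ⟨p, hp, hpe⟩) | ⟨p, hp, hpe⟩) | hx)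
    · simp only [Set.mem_insert_iff, Set.mem_singleton_iff] at hx
      exact ⟨Or.inr ⟨0, 0, Or.inl rfl, Or.inl rfl, by omega⟩, Set.mem_Iio.mpr (by omega)⟩
    · obtain ⟨h1, h2⟩ := hA x hx
      exact ⟨Or.inr ⟨x, 0, Or.inr hx, Or.inl rfl, Or.inl (by omega)⟩, Set.mem_Iio.mpr (by omega)⟩
    · simp only at hpe
      obtain ⟨h1, h2⟩ := hA p hp
      exact ⟨Or.inr ⟨p, 0, Or.inr hp, Or.inl rfl, Or.inr (Or.inl (by omega))⟩,
        Set.mem_Iio.mpr (by omega)⟩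
    · simp only at hpe
      obtain ⟨h1, h2⟩ := hA p hp
      exact ⟨Or.inr ⟨p, 0, Or.inr hp, Or.inl rfl, Or.inr (Or.inr (Or.inl (by omega)))⟩,
        Set.mem_Iio.mpr (by omega)⟩
    · rw [Set.mem_add] at hx
      obtain ⟨p, hp, q, hq, hpq⟩ := hx
      obtain ⟨h1, h2⟩ := hA p hp
      obtain ⟨h3, h4⟩ := hA q hq
      exact ⟨Or.inr ⟨p, q, Or.inr hp, Or.inr hq, Or.inl (by omega)⟩, Set.mem_Iio.mpr (by omega)⟩

lemma LexSet_ncard (ha : 3*m+1 ≤ 2*a) (hb : 3*b ≤ 5*m-1) (hm : 11 ≤ m)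
    (hA : ∀ p ∈ A, a ≤ p ∧ p ≤ b) (hfin : A.Finite) :
    (LexSet m A).ncard = 4 + 3 * A.ncard + (A + A).ncard := by
  have hMcard : ({0, m, 2*m, 3*m} : Set ℕ).ncard = 4 := by
    rw [Set.ncard_insert_of_notMem (by simp; omega)
        ((Set.finite_singleton _).insert _ |>.insert _),
      Set.ncard_insert_of_notMem (by simp; omega) ((Set.finite_singleton _).insert _),
      Set.ncard_insert_of_notMem (by simp; omega), Set.ncard_singleton]
  have hMfin : ({0, m, 2*m, 3*m} : Set ℕ).Finite :=
    (Set.finite_singleton _).insert _ |>.insert _ |>.insert _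
  have hIm1 : ((fun x => m + x) '' A).ncard = A.ncard :=
    Set.ncard_image_of_injective A (fun x y h => by omega)
  have hIm2 : ((fun x => 2*m + x) '' A).ncard = A.ncard :=
    Set.ncard_image_of_injective A (fun x y h => by omega)
  have d1 : Disjoint (({0, m, 2*m, 3*m} : Set ℕ)) A := by
    rw [Set.disjoint_left]
    rintro x hx hxA
    obtain ⟨h1, h2⟩ := hA x hxA
    simp only [Set.mem_insert_iff, Set.mem_singleton_iff] at hx
    omega
  have d2 : Disjoint (({0, m, 2*m, 3*m} : Set ℕ) ∪ A) ((fun x => m + x) '' A) := by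
    rw [Set.disjoint_left]
    rintro x hx ⟨p, hp, hpe⟩
    simp only at hpe
    obtain ⟨h1, h2⟩ := hA p hp
    rcases hx with hx | hx
    · simp only [Set.mem_insert_iff, Set.mem_singleton_iff] at hx; omega
    · obtain ⟨h3, h4⟩ := hA _ hx; omega
  have d3 : Disjoint ((({0, m, 2*m, 3*m} : Set ℕ) ∪ A) ∪ ((fun x => m + x) '' A))
      ((fun x => 2*m + x) '' A) := by
    rw [Set.disjoint_left]
    rintro x hx ⟨p, hp, hpe⟩
    simp only at hpe
    obtain ⟨h1, h2⟩ := hA p hp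
    rcases hx with (hx | hx) | ⟨q, hq, hqe⟩
    · simp only [Set.mem_insert_iff, Set.mem_singleton_iff] at hx; omega
    · obtain ⟨h3, h4⟩ := hA _ hx; omega
    · simp only at hqe; obtain ⟨h3, h4⟩ := hA q hq; omega
  have d4 : Disjoint (((({0, m, 2*m, 3*m} : Set ℕ) ∪ A) ∪ ((fun x => m + x) '' A)) ∪
      ((fun x => 2*m + x) '' A)) (A + A) := by
    rw [Set.disjoint_left]
    rintro x hx hxAA
    rw [Set.mem_add] at hxAA
    obtain ⟨p, hp, q, hq, hpq⟩ := hxAA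
    obtain ⟨h1, h2⟩ := hA p hp
    obtain ⟨h3, h4⟩ := hA q hq
    rcases hx with ((hx | hx) | ⟨r, hr, hre⟩) | ⟨r, hr, hre⟩
    · simp only [Set.mem_insert_iff, Set.mem_singleton_iff] at hx; omega
    · obtain ⟨h5, h6⟩ := hA _ hx; omega
    · simp only at hre; obtain ⟨h5, h6⟩ := hA r hr; omega
    · simp only at hre; obtain ⟨h5, h6⟩ := hA r hr; omega
  unfold LexSet
  rw [Set.ncard_union_eq d4 (((hMfin.union hfin).union (hfin.image _)).union (hfin.image _))
      (hfin.add hfin),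
    Set.ncard_union_eq d3 ((hMfin.union hfin).union (hfin.image _)) (hfin.image _),
    Set.ncard_union_eq d2 (hMfin.union hfin) (hfin.image _),
    Set.ncard_union_eq d1 hMfin hfin, hMcard, hIm1, hIm2]
  ring
end

section
variable {m a b : ℕ} {A : Set ℕ}

lemma Dpred_eq :
    {x | Dpred m A x} = (({4*m} : Set ℕ) ∪ ((fun x => 3*m + x) '' A)
      ∪ ((fun x => m + x) '' (A + A))) ∪ (A + A + A) := by
  ext x
  constructor
  · rintro (h | ⟨p, hp, h⟩ | ⟨p, hp, q, hq, h⟩ | ⟨p, hp, q, hq, r, hr, h⟩)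
    · exact Or.inl (Or.inl (Or.inl h))
    · exact Or.inl (Or.inl (Or.inr ⟨p, hp, by show 3*m + p = x; omega⟩))
    · exact Or.inl (Or.inr ⟨p + q, Set.add_mem_add hp hq, by show m + (p + q) = x; omega⟩)
    · refine Or.inr ?_
      rw [show x = p + q + r from h]
      exact Set.add_mem_add (Set.add_mem_add hp hq) hr
  · rintro ((( h | ⟨p, hp, hpe⟩) | ⟨w, hw, hwe⟩) | hx)
    · exact Or.inl h
    · simp only at hpe
      exact Or.inr (Or.inl ⟨p, hp, by omega⟩)
    · rw [Set.mem_add] at hw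
      obtain ⟨p, hp, q, hq, hpq⟩ := hw
      simp only at hwe
      exact Or.inr (Or.inr (Or.inl ⟨p, hp, q, hq, by omega⟩))
    · rw [Set.mem_add] at hx
      obtain ⟨w, hw, r, hr, hwr⟩ := hx
      rw [Set.mem_add] at hw
      obtain ⟨p, hp, q, hq, hpq⟩ := hw
      exact Or.inr (Or.inr (Or.inr ⟨p, hp, q, hq, r, hr, by omega⟩))

lemma Dpred_finite (hfin : A.Finite) : {x | Dpred m A x}.Finite := by
  rw [Dpred_eq]
  exact (((Set.finite_singleton _).union (hfin.image _)).union
    ((hfin.add hfin).image _)).union ((hfin.add hfin).add hfin)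

lemma Dpred_ncard (hfin : A.Finite) :
    {x | Dpred m A x}.ncard ≤ 1 + A.ncard + (A + A).ncard + (A + A + A).ncard := by
  rw [Dpred_eq]
  have u1 := Set.ncard_union_le (({4*m} : Set ℕ) ∪ ((fun x => 3*m + x) '' A)
    ∪ ((fun x => m + x) '' (A + A))) (A + A + A)
  have u2 := Set.ncard_union_le (({4*m} : Set ℕ) ∪ ((fun x => 3*m + x) '' A))
    ((fun x => m + x) '' (A + A))
  have u3 := Set.ncard_union_le ({4*m} : Set ℕ) ((fun x => 3*m + x) '' A)
  have i1 : ({4*m} : Set ℕ).ncard = 1 := Set.ncard_singleton _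
  have i2 : ((fun x => 3*m + x) '' A).ncard ≤ A.ncard := Set.ncard_image_le hfin
  have i3 : ((fun x => m + x) '' (A + A)).ncard ≤ (A + A).ncard :=
    Set.ncard_image_le (hfin.add hfin)
  omega

lemma window_count (hfin : A.Finite) :
    m ≤ (Set.Ico (4*m) (5*m) \ {x | Dpred m A x}).ncard
      + (1 + A.ncard + (A + A).ncard + (A + A + A).ncard) := by
  have hsub : Set.Ico (4*m) (5*m) ⊆
      (Set.Ico (4*m) (5*m) \ {x | Dpred m A x}) ∪ {x | Dpred m A x} := by
    intro x hx
    by_cases h : Dpred m A x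
    · exact Or.inr h
    · exact Or.inl ⟨hx, h⟩
  have h1 : (Set.Ico (4*m) (5*m)).ncard = m := by rw [ncard_Ico']; omega
  have h2 := Set.ncard_le_ncard hsub
    (((Set.finite_Ico _ _).diff).union (Dpred_finite hfin))
  have h3 := Set.ncard_union_le (Set.Ico (4*m) (5*m) \ {x | Dpred m A x}) {x | Dpred m A x}
  have h4 := Dpred_ncard (m := m) hfin
  omega

lemma prims_count (ha : 3*m+1 ≤ 2*a) (hb : 3*b ≤ 5*m-1) (hm : 11 ≤ m)
    (hA : ∀ p ∈ A, a ≤ p ∧ p ≤ b) (hfin : A.Finite) :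
    1 + A.ncard + (Set.Ico (4*m) (5*m) \ {x | Dpred m A x}).ncard
      ≤ (NSprims {x | inU m A x}).ncard := by
  have hsub := prims_sub ha hb hm hA
  have hW : (Set.Ico (4*m) (5*m) \ {x | Dpred m A x}).Finite := (Set.finite_Ico _ _).diff
  have d1 : Disjoint ({m} : Set ℕ) A := by
    rw [Set.disjoint_left]
    rintro x hx hxA
    obtain ⟨h1, h2⟩ := hA x hxA
    simp only [Set.mem_singleton_iff] at hx
    omega
  have d2 : Disjoint (({m} : Set ℕ) ∪ A) (Set.Ico (4*m) (5*m) \ {x | Dpred m A x}) := by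
    rw [Set.disjoint_left]
    rintro x hx ⟨hx1, _⟩
    rw [Set.mem_Ico] at hx1
    rcases hx with hx | hx
    · simp only [Set.mem_singleton_iff] at hx; omega
    · obtain ⟨h1, h2⟩ := hA x hx; omega
  calc 1 + A.ncard + (Set.Ico (4*m) (5*m) \ {x | Dpred m A x}).ncard
      = (({m} : Set ℕ) ∪ A ∪ (Set.Ico (4*m) (5*m) \ {x | Dpred m A x})).ncard := by
        rw [Set.ncard_union_eq d2 ((Set.finite_singleton _).union hfin) hW,
          Set.ncard_union_eq d1 (Set.finite_singleton _) hfin, Set.ncard_singleton]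
    _ ≤ (NSprims {x | inU m A x}).ncard :=
        Set.ncard_le_ncard hsub (prims_finite ha hm)

lemma AA_ncard_le (hA : ∀ p ∈ A, a ≤ p ∧ p ≤ b) (hfin : A.Finite) :
    (A + A).ncard ≤ 2*b + 1 - 2*a := by
  have : A + A ⊆ Set.Icc (2*a) (2*b) := by
    rintro x hx
    rw [Set.mem_add] at hx
    obtain ⟨p, hp, q, hq, rfl⟩ := hx
    obtain ⟨h1, h2⟩ := hA p hp
    obtain ⟨h3, h4⟩ := hA q hq
    exact Set.mem_Icc.mpr (by omega)
  calc (A+A).ncard ≤ (Set.Icc (2*a) (2*b)).ncard := Set.ncard_le_ncard this (Set.finite_Icc _ _)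
    _ = 2*b + 1 - 2*a := ncard_Icc' _ _

lemma AAA_ncard_le (hA : ∀ p ∈ A, a ≤ p ∧ p ≤ b) (hfin : A.Finite) :
    (A + A + A).ncard ≤ 3*b + 1 - 3*a := by
  have : A + A + A ⊆ Set.Icc (3*a) (3*b) := by
    rintro x hx
    rw [Set.mem_add] at hx
    obtain ⟨w, hw, r, hr, rfl⟩ := hx
    rw [Set.mem_add] at hw
    obtain ⟨p, hp, q, hq, rfl⟩ := hw
    obtain ⟨h1, h2⟩ := hA p hp
    obtain ⟨h3, h4⟩ := hA q hq
    obtain ⟨h5, h6⟩ := hA r hr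
    exact Set.mem_Icc.mpr (by omega)
  calc (A+A+A).ncard ≤ (Set.Icc (3*a) (3*b)).ncard := Set.ncard_le_ncard this (Set.finite_Icc _ _)
    _ = 3*b + 1 - 3*a := ncard_Icc' _ _

lemma AA_ncard_pos (hfin : A.Finite) (hne : A.Nonempty) : 1 ≤ (A + A).ncard := by
  obtain ⟨p, hp⟩ := hne
  exact (Set.ncard_pos (hfin.add hfin)).mpr ⟨p + p, Set.add_mem_add hp hp⟩

/-- master lower bound for `W`. -/
lemma master (ha : 3*m+1 ≤ 2*a) (hb : 3*b ≤ 5*m-1) (hm : 11 ≤ m)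
    (hA : ∀ p ∈ A, a ≤ p ∧ p ≤ b) (hfin : A.Finite) :
    ((m : ℤ) - (A+A).ncard - (A+A+A).ncard) * (4 + 3*A.ncard + (A+A).ncard) - 4*m
      ≤ NSWnum {x | inU m A x} := by
  unfold NSWnum
  rw [conductor_U ha hb hm hA, Lset_eq ha hb hm hA, LexSet_ncard ha hb hm hA hfin]
  have h1 := prims_count ha hb hm hA hfin
  have h2 := window_count (m := m) hfin
  have hP : ((m : ℤ) - (A+A).ncard - (A+A+A).ncard) ≤ ((NSprims {x | inU m A x}).ncard : ℤ) := by
    have c1 := h1; have c2 := h2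
    zify at c1 c2 ⊢
    omega
  have hL : (0 : ℤ) ≤ ((4 + 3*A.ncard + (A+A).ncard : ℕ) : ℤ) := by positivity
  calc ((m : ℤ) - (A+A).ncard - (A+A+A).ncard) * (4 + 3*A.ncard + (A+A).ncard) - 4*m
      ≤ ((NSprims {x | inU m A x}).ncard : ℤ) * (4 + 3*A.ncard + (A+A).ncard) - 4*m := by
        have := mul_le_mul_of_nonneg_right hP (by positivity :
          (0:ℤ) ≤ (4 + 3*(A.ncard:ℤ) + ((A+A).ncard:ℤ)))
        push_cast
        push_cast at this
        nlinarith [this]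
    _ = ((NSprims {x | inU m A x}).ncard : ℤ) * ((4 + 3*A.ncard + (A+A).ncard : ℕ) : ℤ) - 4*m := by
        push_cast; ring
end

private lemma wilf_arith1 (mZ KZ TZ kZ dZ : ℤ) (hK1 : 1 ≤ KZ) (hKd : KZ ≤ 2*dZ+1)
    (hTd : TZ ≤ 3*dZ+1) (hT0 : 0 ≤ TZ) (hm : 6*dZ+5 ≤ mZ) (hk : 3 ≤ kZ)
    (hkd : kZ ≤ dZ+1) (hd : 1 ≤ dZ) :
    9 ≤ (mZ - KZ - TZ) * (4 + 3*kZ + KZ) - 4*mZ := by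
  nlinarith [mul_nonneg (sub_nonneg.2 hK1) (sub_nonneg.2 hKd),
    mul_nonneg (sub_nonneg.2 hK1) (sub_nonneg.2 hm),
    mul_nonneg (sub_nonneg.2 hKd) (sub_nonneg.2 hm),
    mul_nonneg (sub_nonneg.2 hk) (sub_nonneg.2 hm),
    mul_nonneg (sub_nonneg.2 hk) (sub_nonneg.2 hK1),
    mul_nonneg (sub_nonneg.2 hTd) (sub_nonneg.2 hK1),
    sq_nonneg (dZ - KZ), sq_nonneg (KZ - 1), sq_nonneg dZ]

private lemma wilf_arith2 (mZ KZ TZ : ℤ) (hK1 : 1 ≤ KZ) (hK3 : KZ ≤ 3) (hT : TZ ≤ 4)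
    (hT0 : 0 ≤ TZ) (hm : 12 ≤ mZ) :
    9 ≤ (mZ - KZ - TZ) * (4 + 3*2 + KZ) - 4*mZ := by
  nlinarith [mul_nonneg (sub_nonneg.2 hK1) (sub_nonneg.2 hK3),
    mul_nonneg (sub_nonneg.2 hK3) (sub_nonneg.2 hm),
    mul_nonneg (sub_nonneg.2 hT) (by linarith : (0:ℤ) ≤ 10 + KZ),
    mul_nonneg (sub_nonneg.2 hK1) (sub_nonneg.2 hm)]

private lemma wilf_arith3 (P K : ℤ) (hP : 5 ≤ P) (hK : 1 ≤ K) :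
    9 ≤ P * (4 + 3*2 + K) - 44 := by nlinarith





theorem stmt19 (m a b n : ℕ) (hn : 3 ≤ n) (hm : 0 < m)
    (ha : 3 * m + 1 ≤ 2 * a) (hab : a < b) (hb : 3 * b ≤ 5 * m - 1)
    (A : Set ℕ) (hfin : A.Finite) (hcard : A.ncard = n - 1)
    (hmin : IsLeast A a) (hmax : IsGreatest A b)
    (himg : ((fun x : ℕ => (x : ZMod m)) '' A).ncard = n - 1)
    (hB3 : IsBh 3 ((fun x : ℕ => (x : ZMod m)) '' A)) :
    9 ≤ NSWnum (NSgenUpTo ({m} ∪ A) (4 * m)) := by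
  have hA : ∀ p ∈ A, a ≤ p ∧ p ≤ b := fun p hp => ⟨hmin.2 hp, hmax.2 hp⟩
  have hm11 : 11 ≤ m := by omega
  rw [genUpTo_eq ha hb hm11 hA]
  have hK1 : 1 ≤ (A+A).ncard := AA_ncard_pos hfin ⟨a, hmin.1⟩
  have hKd : (A+A).ncard ≤ 2*b+1-2*a := AA_ncard_le hA hfin
  have hTd : (A+A+A).ncard ≤ 3*b+1-3*a := AAA_ncard_le hA hfin
  have hmaster := master ha hb hm11 hA hfin
  by_cases hn4 : 4 ≤ n
  · -- generic case
    have hkd : A.ncard ≤ b+1-a := by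
      have hsub : A ⊆ Set.Icc a b := fun p hp => Set.mem_Icc.mpr (hA p hp)
      calc A.ncard ≤ (Set.Icc a b).ncard := Set.ncard_le_ncard hsub (Set.finite_Icc _ _)
        _ = b+1-a := ncard_Icc' _ _
    have hk3 : 3 ≤ A.ncard := by omega
    refine le_trans ?_ hmaster
    set K := (A+A).ncard
    set T := (A+A+A).ncard
    set k := A.ncard
    have c1 : (K:ℤ) ≤ 2*((b:ℤ)-a)+1 := by omega
    have c2 : (T:ℤ) ≤ 3*((b:ℤ)-a)+1 := by omega
    have c3 : 6*((b:ℤ)-a)+5 ≤ (m:ℤ) := by omega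
    have c4 : (k:ℤ) ≤ ((b:ℤ)-a)+1 := by omega
    have c5 : (3:ℤ) ≤ k := by omega
    have c6 : (1:ℤ) ≤ K := by omega
    have c7 : (1:ℤ) ≤ (b:ℤ)-a := by omega
    have c8 : (0:ℤ) ≤ T := by positivity
    exact wilf_arith1 m ((A+A).ncard) ((A+A+A).ncard) A.ncard ((b:ℤ)-a) c6 c1 c2 c8 c3 c5 c4 c7
  · -- n = 3
    have hA2 : A.ncard = 2 := by omega
    have hAeq : A = {a, b} := by
      refine (Set.eq_of_subset_of_ncard_le ?_ ?_ hfin).symm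
      · rintro x (rfl | rfl)
        exacts [hmin.1, hmax.1]
      · rw [hA2, Set.ncard_pair (show a ≠ b by omega)]
    have hKle : (A+A).ncard ≤ 3 := by
      have hsub : A + A ⊆ ({a+a, a+b, b+b} : Set ℕ) := by
        rintro x hx
        rw [Set.mem_add] at hx
        obtain ⟨p, hp, q, hq, rfl⟩ := hx
        rw [hAeq] at hp hq
        simp only [Set.mem_insert_iff, Set.mem_singleton_iff] at hp hq ⊢
        omega
      calc (A+A).ncard ≤ ({a+a, a+b, b+b} : Set ℕ).ncard := Set.ncard_le_ncard hsub
            ((Set.finite_singleton _).insert _ |>.insert _)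
        _ ≤ 3 := by
            calc ({a+a, a+b, b+b} : Set ℕ).ncard
                ≤ ({a+b, b+b} : Set ℕ).ncard + 1 := Set.ncard_insert_le _ _
              _ ≤ (({b+b} : Set ℕ).ncard + 1) + 1 := by
                  have := Set.ncard_insert_le (a+b) ({b+b} : Set ℕ); omega
              _ ≤ 3 := by rw [Set.ncard_singleton]
    have hTle : (A+A+A).ncard ≤ 4 := by
      have hsub : A + A + A ⊆ ({a+a+a, a+a+b, a+b+b, b+b+b} : Set ℕ) := by
        rintro x hx
        rw [Set.mem_add] at hx
        obtain ⟨w, hw, r, hr, rfl⟩ := hx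
        rw [Set.mem_add] at hw
        obtain ⟨p, hp, q, hq, rfl⟩ := hw
        rw [hAeq] at hp hq hr
        simp only [Set.mem_insert_iff, Set.mem_singleton_iff] at hp hq hr ⊢
        omega
      calc (A+A+A).ncard ≤ ({a+a+a, a+a+b, a+b+b, b+b+b} : Set ℕ).ncard :=
            Set.ncard_le_ncard hsub
              ((Set.finite_singleton _).insert _ |>.insert _ |>.insert _)
        _ ≤ 4 := by
            have i1 := Set.ncard_insert_le (a+a+a) ({a+a+b, a+b+b, b+b+b} : Set ℕ)
            have i2 := Set.ncard_insert_le (a+a+b) ({a+b+b, b+b+b} : Set ℕ)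
            have i3 := Set.ncard_insert_le (a+b+b) ({b+b+b} : Set ℕ)
            have i4 : ({b+b+b} : Set ℕ).ncard = 1 := Set.ncard_singleton _
            omega
    by_cases hm12 : 12 ≤ m
    · refine le_trans ?_ hmaster
      set K := (A+A).ncard
      set T := (A+A+A).ncard
      have hcast : (A.ncard : ℤ) = 2 := by rw [hA2]; norm_num
      rw [hcast]
      have c1 : (1:ℤ) ≤ K := by omega
      have c2 : (K:ℤ) ≤ 3 := by omega
      have c3 : (T:ℤ) ≤ 4 := by omega
      have c4 : (12:ℤ) ≤ m := by omega
      exact wilf_arith2 m ((A+A).ncard) ((A+A+A).ncard) c1 c2 c3 (by positivity) c4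
    · -- m = 11, a = 17, b = 18
      have hm' : m = 11 := by omega
      have ha' : a = 17 := by omega
      have hb' : b = 18 := by omega
      subst hm' ha' hb'
      have h5sub : ({11, 17, 18, 48, 49} : Set ℕ) ⊆ NSprims {x | inU 11 A x} := by
        intro x hx
        apply prims_sub ha hb hm11 hA
        simp only [Set.mem_insert_iff, Set.mem_singleton_iff] at hx
        rcases hx with rfl | rfl | rfl | rfl | rfl
        · exact Or.inl (Or.inl rfl)
        · exact Or.inl (Or.inr (by rw [hAeq]; exact Or.inl rfl))
        · exact Or.inl (Or.inr (by rw [hAeq]; exact Or.inr rfl))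
        · refine Or.inr ⟨Set.mem_Ico.mpr (by omega), ?_⟩
          rintro (h | ⟨p, hp, h⟩ | ⟨p, hp, q, hq, h⟩ | ⟨p, hp, q, hq, r, hr, h⟩) <;>
            [omega; rw [hAeq] at hp; rw [hAeq] at hp hq; rw [hAeq] at hp hq hr] <;>
            simp only [Set.mem_insert_iff, Set.mem_singleton_iff] at * <;> omega
        · refine Or.inr ⟨Set.mem_Ico.mpr (by omega), ?_⟩
          rintro (h | ⟨p, hp, h⟩ | ⟨p, hp, q, hq, h⟩ | ⟨p, hp, q, hq, r, hr, h⟩) <;>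
            [omega; rw [hAeq] at hp; rw [hAeq] at hp hq; rw [hAeq] at hp hq hr] <;>
            simp only [Set.mem_insert_iff, Set.mem_singleton_iff] at * <;> omega
      have h5card : ({11, 17, 18, 48, 49} : Set ℕ).ncard = 5 := by
        rw [show ({11, 17, 18, 48, 49} : Set ℕ) = (↑({11, 17, 18, 48, 49} : Finset ℕ)) by simp,
          Set.ncard_coe_finset]
        decide
      have hP5 : 5 ≤ (NSprims {x | inU 11 A x}).ncard := by
        rw [← h5card]
        exact Set.ncard_le_ncard h5sub (prims_finite ha hm11)
      unfold NSWnum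
      rw [conductor_U ha hb hm11 hA, Lset_eq ha hb hm11 hA, LexSet_ncard ha hb hm11 hA hfin, hA2]
      have hPZ : (5:ℤ) ≤ ((NSprims {x | inU 11 A x}).ncard : ℤ) := by exact_mod_cast hP5
      have hKZ : (1:ℤ) ≤ ((A+A).ncard : ℤ) := by exact_mod_cast hK1
      push_cast
      linarith [wilf_arith3 _ ((A+A).ncard : ℤ) hPZ hKZ]
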